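/- Let x be a dyadic point in (0,1), X = (x, F(x)), and Ω the region under the graph of the Knopp function F. Then the weak and strong accessibility exponents satisfy E^w_{Ω^c}(X) = E^s_{Ω^c}(X) = 1/α - 1 and E^w_Ω(X) = E^s_Ω(X) = 0. -/

import Mathlib

open Real MeasureTheory Filter Topology

noncomputable def phi (x : ℝ) : ℝ := |x - round x|

lemma phi_nonneg (x : ℝ) : 0 ≤ phi x := abs_nonneg _
lemma phi_le_half (x : ℝ) : phi x ≤ 1/2 := abs_sub_round x

lemma phi_le_int (x : ℝ) (n : ℤ) : phi x ≤ |x - n| := by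
  rcases eq_or_ne n (round x) with h | h
  · simp [phi, h]
  · have h1 : (1:ℝ) ≤ |(n:ℝ) - round x| := by
      rw [← Int.cast_sub, ← Int.cast_abs]
      exact_mod_cast Int.one_le_abs (sub_ne_zero.mpr (by exact_mod_cast h))
    have h2 : |(n:ℝ) - round x| ≤ |x - n| + |x - round x| := by
      calc |(n:ℝ) - round x| = |(x - round x) - (x - n)| := by ring_nf
        _ ≤ |x - round x| + |x - n| := abs_sub _ _
        _ = |x - n| + |x - round x| := by ring
    have := phi_le_half x
    unfold phi at *
    linarith
lemma phi_le_abs (x : ℝ) : phi x ≤ |x| := by simpa using phi_le_int x 0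
lemma phi_neg (b : ℝ) : phi (-b) = phi b := by
  refine le_antisymm ?_ ?_
  · calc phi (-b) ≤ |(-b) - (-round b : ℤ)| := phi_le_int _ _
      _ = |b - round b| := by push_cast; rw [← abs_neg]; ring_nf
  · calc phi b ≤ |b - (-round (-b) : ℤ)| := phi_le_int _ _
      _ = |(-b) - round (-b)| := by push_cast; rw [← abs_neg]; ring_nf
lemma phi_add_le (a b : ℝ) : phi (a + b) ≤ phi a + phi b := by
  calc phi (a+b) ≤ |a + b - (round a + round b : ℤ)| := phi_le_int _ _
    _ = |(a - round a) + (b - round b)| := by push_cast; ring_nf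
    _ ≤ _ := abs_add_le _ _
lemma phi_int (n : ℤ) : phi n = 0 := by
  have h := phi_le_int (n:ℝ) n
  have := phi_nonneg (n:ℝ)
  simp at h; linarith
lemma phi_int_add (n : ℤ) (x : ℝ) : phi (n + x) = phi x := by
  refine le_antisymm (by simpa [phi_int] using phi_add_le (n:ℝ) x) ?_
  have := phi_add_le ((n:ℝ) + x) (-(n:ℝ))
  rw [show -(n:ℝ) = ((-n : ℤ) : ℝ) by push_cast; ring, phi_int] at this
  simpa using this
lemma phi_eq_abs {x : ℝ} (h : |x| ≤ 1/2) : phi x = |x| := by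
  refine le_antisymm (phi_le_abs x) ?_
  rcases eq_or_lt_of_le h with h' | h'
  · rcases abs_eq (by norm_num : (0:ℝ) ≤ 1/2) |>.mp h' with h2 | h2 <;>
    · subst h2
      unfold phi
      norm_num [round_eq]
      try norm_num [Int.floor_eq_iff]
  · have : round x = 0 := by
      rw [round_eq]
      rcases abs_lt.mp h' with ⟨l, u⟩
      have : ⌊x + 1/2⌋ = 0 := Int.floor_eq_zero_iff.mpr ⟨by linarith, by norm_num; linarith⟩
      simpa using this
    simp [phi, this]
lemma phi_sub_le (a b : ℝ) : phi a - phi b ≤ phi (a + b) := by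
  have := phi_add_le (a + b) (-b)
  rw [phi_neg] at this
  simp at this; linarith

noncomputable def Knopp (α : ℝ) (x : ℝ) : ℝ :=
  ∑' j : ℕ, (2:ℝ) ^ (-(α * (j:ℝ))) * phi ((2:ℝ) ^ j * x)
noncomputable def Ew (Ω : Set (ℝ × ℝ)) (X : ℝ × ℝ) : ℝ :=
  Filter.liminf (fun r : ℝ =>
    Real.log ((MeasureTheory.volume (Ω ∩ Metric.ball X r)).toReal) / Real.log r) (𝓝[>] (0:ℝ)) - 2

noncomputable def Es (Ω : Set (ℝ × ℝ)) (X : ℝ × ℝ) : ℝ :=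
  Filter.limsup (fun r : ℝ =>
    Real.log ((MeasureTheory.volume (Ω ∩ Metric.ball X r)).toReal) / Real.log r) (𝓝[>] (0:ℝ)) - 2

noncomputable def KnoppDomain (α : ℝ) : Set (ℝ × ℝ) :=
  {p | p.1 ∈ Set.Icc (0:ℝ) 1 ∧ p.2 ∈ Set.Icc (0:ℝ) (Knopp α p.1)}

def isDyadic (x : ℝ) : Prop := ∃ K N : ℕ, Odd K ∧ x = (K:ℝ) / 2 ^ N

section knopp
variable {α : ℝ} (hα : 0 < α) (hα1 : α < 1)

lemma rho_eq (j : ℕ) : (2:ℝ) ^ (-(α * (j:ℝ))) = ((2:ℝ) ^ (-α)) ^ j := by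
  rw [← Real.rpow_natCast ((2:ℝ)^(-α)) j, ← Real.rpow_mul (by norm_num)]
  ring_nf

lemma rho_pos : 0 < (2:ℝ) ^ (-α) := Real.rpow_pos_of_pos (by norm_num) _

lemma rho_lt_one (hα : 0 < α) : (2:ℝ) ^ (-α) < 1 :=
  Real.rpow_lt_one_of_one_lt_of_neg (by norm_num) (by linarith)

lemma knopp_summable_aux (f : ℕ → ℝ) (hα : 0 < α)
    (h0 : ∀ j, 0 ≤ f j) (h1 : ∀ j, f j ≤ 1/2) :
    Summable (fun j => ((2:ℝ) ^ (-α)) ^ j * f j) := by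
  refine Summable.of_nonneg_of_le (fun j => mul_nonneg (pow_nonneg (rho_pos).le _) (h0 j))
    (fun j => ?_) (Summable.mul_right (1/2)
      (summable_geometric_of_lt_one (rho_pos).le (rho_lt_one hα)))
  exact mul_le_mul_of_nonneg_left (h1 j) (pow_nonneg (rho_pos).le _)

lemma knopp_summable (hα : 0 < α) (x : ℝ) :
    Summable (fun j => ((2:ℝ) ^ (-α)) ^ j * phi ((2:ℝ) ^ j * x)) :=
  knopp_summable_aux _ hα (fun j => phi_nonneg _) (fun j => phi_le_half _)

lemma Knopp_eq (x : ℝ) : Knopp α x = ∑' j : ℕ, ((2:ℝ) ^ (-α)) ^ j * phi ((2:ℝ) ^ j * x) := by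
  unfold Knopp; congr 1; ext j; rw [rho_eq]

lemma Knopp_nonneg (hα : 0 < α) (x : ℝ) : 0 ≤ Knopp α x := by
  rw [Knopp_eq]
  exact tsum_nonneg fun j => mul_nonneg (pow_nonneg (rho_pos).le _) (phi_nonneg _)

-- min summable
lemma min_summable (hα : 0 < α) (t : ℝ) :
    Summable (fun j => ((2:ℝ) ^ (-α)) ^ j * min ((2:ℝ) ^ j * |t|) (1/2)) :=
  knopp_summable_aux _ hα (fun j => le_min (by positivity) (by norm_num))
    (fun j => min_le_right _ _)

-- upper increment, raw
lemma knopp_upper_raw (hα : 0 < α) (x h : ℝ) :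
    Knopp α (x + h) ≤ Knopp α x + ∑' j : ℕ, ((2:ℝ) ^ (-α)) ^ j * min ((2:ℝ) ^ j * |h|) (1/2) := by
  rw [Knopp_eq, Knopp_eq, ← Summable.tsum_add (knopp_summable hα x) (min_summable hα h)]
  refine Summable.tsum_le_tsum (fun j => ?_) (knopp_summable hα _)
    ((knopp_summable hα x).add (min_summable hα h))
  rw [← mul_add]
  refine mul_le_mul_of_nonneg_left ?_ (pow_nonneg (rho_pos).le _)
  rw [mul_add]
  refine (phi_add_le _ _).trans (add_le_add le_rfl ?_)
  exact le_min ((phi_le_abs _).trans_eq (by rw [abs_mul]; simp [abs_of_nonneg])) (phi_le_half _)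
end knopp

section est
variable {α : ℝ}

lemma inv_pow_rpow (hα : 0 < α) (k : ℕ) :
    (((2:ℝ) ^ k)⁻¹) ^ α = ((2:ℝ) ^ (-α)) ^ k := by
  rw [← Real.rpow_natCast (2:ℝ) k, ← Real.rpow_neg_one (((2:ℝ)^((k:ℕ):ℝ)))]
  rw [← Real.rpow_natCast ((2:ℝ)^(-α)) k, ← Real.rpow_mul (by norm_num),
    ← Real.rpow_mul (by positivity), ← Real.rpow_mul (by norm_num)]
  ring_nf

lemma sigma_gt_one (hα1 : α < 1) : 1 < 2 * (2:ℝ) ^ (-α) := by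
  have : ((2:ℝ))^(-(1:ℝ)) < (2:ℝ)^(-α) := by
    apply Real.rpow_lt_rpow_left_iff (by norm_num : (1:ℝ) < 2) |>.mpr
    linarith
  rw [Real.rpow_neg_one] at this
  norm_num at this
  linarith

noncomputable def Cu (α : ℝ) : ℝ :=
  2 / (2 * (2:ℝ) ^ (-α) - 1) + 1 / (2 * (1 - (2:ℝ) ^ (-α)))

lemma Cu_pos (hα : 0 < α) (hα1 : α < 1) : 0 < Cu α := by
  have h1 := sigma_gt_one (α := α) hα1
  have h2 := rho_lt_one (α := α) hα
  have : 0 < 2 * (2:ℝ)^(-α) - 1 := by linarith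
  have : 0 < 2 * (1 - (2:ℝ)^(-α)) := by linarith
  unfold Cu; positivity

lemma sum_min_le (hα : 0 < α) (hα1 : α < 1) {t : ℝ} (ht : 0 < t) (m : ℕ)
    (h1 : 1 < t * 2 ^ (m+1)) (h2 : t * 2 ^ m ≤ 1) :
    ∑' j : ℕ, ((2:ℝ) ^ (-α)) ^ j * min ((2:ℝ) ^ j * t) (1/2) ≤ Cu α * t ^ α := by
  set ρ := (2:ℝ) ^ (-α) with hρ
  have hρ0 : 0 < ρ := rho_pos
  have hρ1 : ρ < 1 := rho_lt_one hα
  have hσ : 1 < 2 * ρ := sigma_gt_one hα1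
  have habs : |t| = t := abs_of_pos ht
  have hsum := min_summable (α := α) hα t
  rw [habs] at hsum
  -- key: ρ^(m+1) ≤ t^α
  have hkey : ρ ^ (m+1) ≤ t ^ α := by
    rw [← inv_pow_rpow hα (m+1)]
    apply Real.rpow_le_rpow (by positivity) _ hα.le
    rw [inv_le_iff_one_le_mul₀ (by positivity)]
    linarith [h1, mul_comm t ((2:ℝ) ^ (m+1))]
  have hsplit := Summable.sum_add_tsum_nat_add (f := fun j => ρ ^ j * min ((2:ℝ) ^ j * t) (1/2)) (m+1) hsum
  rw [← hsplit]
  have hhead : ∑ j ∈ Finset.range (m+1), ρ ^ j * min ((2:ℝ) ^ j * t) (1/2)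
      ≤ 2 / (2 * ρ - 1) * t ^ α := by
    calc ∑ j ∈ Finset.range (m+1), ρ ^ j * min ((2:ℝ) ^ j * t) (1/2)
        ≤ ∑ j ∈ Finset.range (m+1), (2 * ρ) ^ j * t := by
          refine Finset.sum_le_sum fun j _ => ?_
          rw [mul_pow]
          calc ρ ^ j * min ((2:ℝ) ^ j * t) (1/2) ≤ ρ ^ j * ((2:ℝ)^j * t) :=
              mul_le_mul_of_nonneg_left (min_le_left _ _) (by positivity)
            _ = 2 ^ j * ρ ^ j * t := by ring
      _ = (((2*ρ) ^ (m+1) - 1) / (2 * ρ - 1)) * t := by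
          rw [← Finset.sum_mul, geom_sum_eq (by linarith)]
      _ ≤ ((2*ρ) ^ (m+1) / (2 * ρ - 1)) * t := by
          apply mul_le_mul_of_nonneg_right _ ht.le
          apply div_le_div_of_nonneg_right _ (by linarith)
          · linarith [pow_nonneg (by linarith : (0:ℝ) ≤ 2*ρ) (m+1)]
      _ = (t * 2 ^ (m+1)) * ρ ^ (m+1) / (2 * ρ - 1) := by rw [mul_pow]; ring
      _ ≤ 2 * t ^ α / (2 * ρ - 1) := by
          apply div_le_div_of_nonneg_right _ (by linarith)
          calc (t * 2 ^ (m+1)) * ρ ^ (m+1) = (t * 2^m) * (2 * ρ^(m+1)) := by ring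
            _ ≤ 1 * (2 * ρ^(m+1)) := by
                apply mul_le_mul_of_nonneg_right h2 (by positivity)
            _ ≤ 2 * t ^ α := by rw [one_mul]; linarith
      _ = 2 / (2 * ρ - 1) * t ^ α := by ring
  have htail : ∑' k : ℕ, ρ ^ (k + (m+1)) * min ((2:ℝ) ^ (k + (m+1)) * t) (1/2)
      ≤ 1 / (2 * (1 - ρ)) * t ^ α := by
    have hs2 : Summable (fun k : ℕ => ρ ^ (k + (m+1)) * (1/2)) := by
      apply Summable.mul_right
      exact ((summable_geometric_of_lt_one hρ0.le hρ1).mul_right _).congr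
        (fun k => by rw [pow_add]) |>.congr (fun k => rfl)
    calc ∑' k : ℕ, ρ ^ (k + (m+1)) * min ((2:ℝ) ^ (k + (m+1)) * t) (1/2)
        ≤ ∑' k : ℕ, ρ ^ (k + (m+1)) * (1/2) := by
          refine Summable.tsum_le_tsum (fun k => ?_) ((hsum.comp_injective (add_left_injective (m+1)))) hs2
          exact mul_le_mul_of_nonneg_left (min_le_right _ _) (by positivity)
      _ = ρ ^ (m+1) * (1/2) / (1 - ρ) := by
          rw [show (fun k : ℕ => ρ ^ (k + (m+1)) * (1/2)) = (fun k : ℕ => ρ ^ k * (ρ ^ (m+1) * (1/2))) from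
            funext fun k => by rw [pow_add]; ring]
          rw [tsum_mul_right, tsum_geometric_of_lt_one hρ0.le hρ1, div_eq_mul_inv]
          ring
      _ ≤ 1 / (2 * (1 - ρ)) * t ^ α := by
          rw [div_le_iff₀ (by linarith)]
          have h2' : (0:ℝ) < 2 * (1 - ρ) := by linarith
          calc ρ ^ (m+1) * (1/2) ≤ t ^ α * (1/2) :=
              mul_le_mul_of_nonneg_right hkey (by norm_num)
            _ = 1 / (2 * (1-ρ)) * t ^ α * (1 - ρ) := by field_simp [(by linarith : (1:ℝ) - ρ ≠ 0)] <;> ring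
  calc _ ≤ 2 / (2 * ρ - 1) * t ^ α + 1 / (2 * (1 - ρ)) * t ^ α := add_le_add hhead htail
    _ = Cu α * t ^ α := by rw [Cu]; ring
end est

section lower
variable {α : ℝ}

lemma exists_scale {t : ℝ} (ht : 0 < t) (ht2 : t ≤ 1/2) (N : ℕ) (htN : t * 2 ^ (N+1) ≤ 1) :
    ∃ m : ℕ, N ≤ m ∧ 1 < t * 2 ^ (m+2) ∧ t * 2 ^ (m+1) ≤ 1 := by
  have hex : ∃ n : ℕ, 1 < t * 2 ^ (n+2) := by
    obtain ⟨n, hn⟩ := pow_unbounded_of_one_lt (1/t) (by norm_num : (1:ℝ) < 2)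
    refine ⟨n, ?_⟩
    have h2 : (2:ℝ)^n ≤ 2^(n+2) := pow_le_pow_right₀ (by norm_num) (by omega)
    have : 1/t < 2^(n+2) := lt_of_lt_of_le hn h2
    rw [div_lt_iff₀ ht] at this
    linarith [mul_comm t ((2:ℝ)^(n+2))]
  classical
  obtain ⟨m, hP, hmin⟩ : ∃ m : ℕ, (1 < t * 2 ^ (m+2)) ∧ ∀ n < m, ¬ (1 < t * 2 ^ (n+2)) :=
    ⟨Nat.find hex, Nat.find_spec hex, fun n hn => Nat.find_min hex hn⟩
  have hNm : N ≤ m := by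
    by_contra hc
    push_neg at hc
    have := hP
    have h2 : (2:ℝ) ^ (m+2) ≤ 2 ^ (N+1) := pow_le_pow_right₀ (by norm_num) (by omega)
    nlinarith [htN, mul_le_mul_of_nonneg_left h2 ht.le]
  refine ⟨m, hNm, hP, ?_⟩
  rcases Nat.eq_zero_or_pos m with h0 | h0
  · rw [h0]; norm_num; linarith
  · have := hmin (m-1) (by omega)
    push_neg at this
    have : t * 2 ^ (m - 1 + 2) ≤ 1 := this
    rwa [show m - 1 + 2 = m + 1 by omega] at this

lemma knopp_incr_lower_raw (hα : 0 < α) (hα1 : α < 1) {x : ℝ} (K N : ℕ)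
    (hxd : x = (K:ℝ) / 2 ^ N) {h : ℝ} (hh0 : h ≠ 0) (hh : |h| * 2 ^ (N+1) ≤ 1) :
    Knopp α x + |h| ^ α / 4 - (∑ j ∈ Finset.range N, (2 * (2:ℝ)^(-α)) ^ j) * |h|
      ≤ Knopp α (x + h) := by
  set ρ := (2:ℝ) ^ (-α) with hρ
  have hρ0 : 0 < ρ := rho_pos
  have hρ1 : ρ < 1 := rho_lt_one hα
  set t := |h| with htdef
  have ht : 0 < t := abs_pos.mpr hh0
  have ht2 : t ≤ 1/2 := by
    nlinarith [pow_le_pow_right₀ (by norm_num : (1:ℝ) ≤ 2) (by omega : 1 ≤ N+1)]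
  obtain ⟨m, hNm, hm1, hm2⟩ := exists_scale ht ht2 N hh
  -- integer values
  have hint : ∀ j, N ≤ j → ∃ z : ℤ, (2:ℝ) ^ j * x = (z:ℝ) := by
    intro j hj
    refine ⟨(K : ℤ) * 2 ^ (j - N), ?_⟩
    rw [hxd]
    push_cast
    rw [pow_sub₀ (2:ℝ) (by norm_num) hj]
    ring
  set w : ℕ → ℝ := fun j => if j < N then -(ρ ^ j * ((2:ℝ) ^ j * t)) else ρ ^ j * phi ((2:ℝ) ^ j * h)
    with hw
  have hterm : ∀ j, ρ ^ j * phi ((2:ℝ) ^ j * x) + w j ≤ ρ ^ j * phi ((2:ℝ) ^ j * (x + h)) := by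
    intro j
    have hexp : (2:ℝ) ^ j * (x + h) = (2:ℝ)^j * x + (2:ℝ)^j * h := by ring
    by_cases hj : j < N
    · simp only [hw, if_pos hj]
      have h1 : phi ((2:ℝ)^j * x) - phi ((2:ℝ)^j * h) ≤ phi ((2:ℝ)^j * (x+h)) := by
        rw [hexp]; exact phi_sub_le _ _
      have h2 : phi ((2:ℝ)^j * h) ≤ (2:ℝ)^j * t := by
        refine (phi_le_abs _).trans ?_
        rw [abs_mul, abs_of_nonneg (by positivity : (0:ℝ) ≤ (2:ℝ)^j)]
      nlinarith [pow_nonneg hρ0.le j]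
    · push_neg at hj
      simp only [hw, if_neg (not_lt.mpr hj)]
      obtain ⟨z, hz⟩ := hint j hj
      rw [hexp, hz, phi_int_add, show phi ((z:ℝ)) = 0 from phi_int z]
      simp
  -- summability of w
  have hwsum : Summable w := by
    apply Summable.of_norm_bounded (g := fun j => ρ ^ j * ((2:ℝ)^N * t + 1/2))
      ((summable_geometric_of_lt_one hρ0.le hρ1).mul_right _)
    intro j
    rw [hw]
    by_cases hj : j < N
    · simp only [if_pos hj, norm_neg, Real.norm_eq_abs]
      rw [abs_of_nonneg (by positivity)]
      have h2 : (2:ℝ)^j ≤ 2^N := pow_le_pow_right₀ (by norm_num) hj.le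
      have h3 : (2:ℝ)^j * t ≤ 2^N * t + 1/2 := by nlinarith
      exact mul_le_mul_of_nonneg_left h3 (pow_nonneg hρ0.le j)
    · simp only [if_neg hj, Real.norm_eq_abs]
      rw [abs_of_nonneg (mul_nonneg (by positivity) (phi_nonneg _))]
      have h3 : phi ((2:ℝ)^j * h) ≤ 2^N * t + 1/2 := by
        refine (phi_le_half _).trans ?_
        nlinarith [mul_pos (pow_pos (by norm_num : (0:ℝ) < 2) N) ht]
      exact mul_le_mul_of_nonneg_left h3 (pow_nonneg hρ0.le j)
  -- main inequality
  have hmain : Knopp α x + ∑' j, w j ≤ Knopp α (x + h) := by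
    rw [Knopp_eq, Knopp_eq, ← Summable.tsum_add (knopp_summable hα x) hwsum]
    exact Summable.tsum_le_tsum hterm ((knopp_summable hα x).add hwsum) (knopp_summable hα _)
  -- lower bound tsum w
  have hsplit := Summable.sum_add_tsum_nat_add (f := w) N hwsum
  have hhead : ∑ j ∈ Finset.range N, w j = -((∑ j ∈ Finset.range N, (2*ρ)^j) * t) := by
    have hc : ∀ j ∈ Finset.range N, w j = -((2*ρ)^j * t) := by
      intro j hj
      rw [hw]
      simp only [if_pos (Finset.mem_range.mp hj)]
      rw [mul_pow]; ring
    rw [Finset.sum_congr rfl hc, Finset.sum_neg_distrib, Finset.sum_mul]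
  have htail : ρ ^ m * ((2:ℝ)^m * t) ≤ ∑' k : ℕ, w (k + N) := by
    have hks : Summable (fun k => w (k + N)) := hwsum.comp_injective (add_left_injective N)
    have hnn : ∀ k, 0 ≤ w (k + N) := by
      intro k
      rw [hw]
      simp only [if_neg (by omega : ¬ (k + N < N))]
      exact mul_nonneg (by positivity) (phi_nonneg _)
    have hle := Summable.le_tsum hks (m - N) (fun k _ => hnn k)
    refine le_trans ?_ hle
    rw [hw]
    simp only [if_neg (by omega : ¬ (m - N + N < N))]
    rw [show m - N + N = m by omega]
    have hphi : phi ((2:ℝ)^m * h) = (2:ℝ)^m * t := by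
      rw [show (2:ℝ)^m * t = |(2:ℝ)^m * h| by rw [abs_mul, abs_of_nonneg (by positivity : (0:ℝ) ≤ (2:ℝ)^m)]]
      apply phi_eq_abs
      rw [abs_mul, abs_of_nonneg (by positivity : (0:ℝ) ≤ (2:ℝ)^m)]
      nlinarith [pow_pos (by norm_num : (0:ℝ) < 2) m, pow_succ (2:ℝ) m]
    rw [hphi]
  have hquarter : t ^ α / 4 ≤ ρ ^ m * ((2:ℝ)^m * t) := by
    have hk1 : t ^ α ≤ ρ ^ m := by
      have h1 : t ≤ ((2:ℝ) ^ (m+1))⁻¹ := by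
        rw [inv_eq_one_div, le_div_iff₀ (by positivity)]
        linarith
      have := Real.rpow_le_rpow ht.le h1 hα.le
      rw [inv_pow_rpow hα (m+1)] at this
      calc t ^ α ≤ ρ ^ (m+1) := this
        _ ≤ ρ ^ m := pow_le_pow_of_le_one hρ0.le hρ1.le (by omega)
    have hk2 : (1:ℝ)/4 ≤ (2:ℝ)^m * t := by
      nlinarith [pow_pos (by norm_num : (0:ℝ) < 2) m, pow_add (2:ℝ) m 2]
    nlinarith [Real.rpow_nonneg ht.le α, pow_nonneg hρ0.le m]
  have := hmain
  rw [← hsplit, hhead] at this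
  linarith [htail, hquarter]
end lower

section packaged
variable {α : ℝ}

lemma knopp_incr_upper (hα : 0 < α) (hα1 : α < 1) (x h : ℝ) (hh : |h| ≤ 1/2) :
    Knopp α (x + h) ≤ Knopp α x + Cu α * |h| ^ α := by
  rcases eq_or_ne h 0 with h0 | h0
  · subst h0
    simp [Real.zero_rpow hα.ne']
  · have ht : 0 < |h| := abs_pos.mpr h0
    obtain ⟨m, _, hm1, hm2⟩ := exists_scale ht hh 0 (by norm_num; linarith)
    refine (knopp_upper_raw hα x h).trans (add_le_add le_rfl ?_)
    have := sum_min_le hα hα1 ht (m+1) (by rw [show m+1+1 = m+2 by omega]; exact hm1) hm2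
    exact this

lemma knopp_incr_lower (hα : 0 < α) (hα1 : α < 1) {x : ℝ} (K N : ℕ)
    (hxd : x = (K:ℝ) / 2 ^ N) :
    ∃ δ : ℝ, 0 < δ ∧ δ ≤ 1/2 ∧ ∀ h : ℝ, |h| ≤ δ →
      Knopp α x + |h| ^ α / 8 ≤ Knopp α (x + h) := by
  set ρ := (2:ℝ) ^ (-α) with hρ
  set L := ∑ j ∈ Finset.range N, (2 * ρ) ^ j with hL
  have hL0 : 0 ≤ L := Finset.sum_nonneg fun j _ => pow_nonneg (by positivity) j
  have h1α : 0 < 1 - α := by linarith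
  set δ2 : ℝ := ((8 * (L+1))⁻¹) ^ (1/(1-α)) with hδ2
  have hδ2pos : 0 < δ2 := Real.rpow_pos_of_pos (by positivity) _
  refine ⟨min (min ((2 ^ (N+1) : ℝ))⁻¹ δ2) (1/2), lt_min (lt_min (by positivity) hδ2pos) (by norm_num),
    min_le_right _ _, fun h hh => ?_⟩
  rcases eq_or_ne h 0 with h0 | h0
  · subst h0
    simp [Real.zero_rpow hα.ne']
  · have ht : 0 < |h| := abs_pos.mpr h0
    have hh1 : |h| * 2 ^ (N+1) ≤ 1 := by
      have : |h| ≤ ((2 ^ (N+1) : ℝ))⁻¹ := hh.trans ((min_le_left _ _).trans (min_le_left _ _))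
      rw [inv_eq_one_div, le_div_iff₀ (by positivity)] at this
      linarith
    have hraw := knopp_incr_lower_raw hα hα1 K N hxd h0 hh1
    have hLt : L * |h| ≤ |h| ^ α / 8 := by
      have hmono : |h| ^ (1-α) ≤ δ2 ^ (1-α) :=
        Real.rpow_le_rpow ht.le (hh.trans ((min_le_left _ _).trans (min_le_right _ _))) h1α.le
      have hδ2e : δ2 ^ (1-α) = (8 * (L+1))⁻¹ := by
        rw [hδ2, ← Real.rpow_mul (by positivity), one_div, inv_mul_cancel₀ h1α.ne',
          Real.rpow_one]
      rw [hδ2e] at hmono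
      have hsplit : |h| = |h| ^ (1-α) * |h| ^ α := by
        rw [← Real.rpow_add ht, sub_add_cancel, Real.rpow_one]
      have hrα : (0:ℝ) ≤ |h| ^ α := Real.rpow_nonneg ht.le α
      have h8 : L * (8 * (L+1))⁻¹ ≤ 1/8 := by
        rw [mul_inv_le_iff₀ (c := 8 * (L+1)) (by linarith)]
        nlinarith
      calc L * |h| = L * |h| ^ (1-α) * |h| ^ α := by rw [mul_assoc, ← hsplit]
        _ ≤ L * (8 * (L+1))⁻¹ * |h| ^ α := by
            apply mul_le_mul_of_nonneg_right _ hrα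
            exact mul_le_mul_of_nonneg_left hmono hL0
        _ ≤ 1/8 * |h| ^ α := mul_le_mul_of_nonneg_right h8 hrα
        _ = |h| ^ α / 8 := by ring
    have : |h| ^ α / 4 - |h| ^ α / 8 = |h| ^ α / 8 := by ring
    linarith
end packaged


lemma const_div_log_tendsto (c : ℝ) :
    Tendsto (fun r : ℝ => c / Real.log r) (𝓝[>] (0:ℝ)) (𝓝 0) := by
  have h2 : Tendsto Real.log (𝓝[>] (0:ℝ)) atBot :=
    Real.tendsto_log_nhdsNE_zero.mono_left
      (nhdsWithin_mono _ (fun y hy => ne_of_gt hy))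
  have h3 : Tendsto (fun r : ℝ => -Real.log r) (𝓝[>] (0:ℝ)) atTop :=
    tendsto_neg_atBot_atTop.comp h2
  have h4 := Filter.Tendsto.div_atTop (tendsto_const_nhds (x := -c)) h3
  have : (fun r : ℝ => -c / -Real.log r) = fun r : ℝ => c / Real.log r := by
    funext r; rw [neg_div_neg_eq]
  rwa [this] at h4

lemma tendsto_log_ratio (V : ℝ → ℝ) (p c C : ℝ) (hc : 0 < c)
    (hev : ∀ᶠ r in 𝓝[>](0:ℝ), c * r ^ p ≤ V r ∧ V r ≤ C * r ^ p) :
    Tendsto (fun r => Real.log (V r) / Real.log r) (𝓝[>](0:ℝ)) (𝓝 p) := by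
  have hC : 0 < C := by
    obtain ⟨r, hr, hr0⟩ := (hev.and self_mem_nhdsWithin).exists
    have h1 : (0:ℝ) < r ^ p := Real.rpow_pos_of_pos hr0 p
    nlinarith [hr.1.trans hr.2]
  have hlow : Tendsto (fun r : ℝ => p + Real.log C / Real.log r) (𝓝[>](0:ℝ)) (𝓝 p) := by
    simpa using (tendsto_const_nhds (x := p)).add (const_div_log_tendsto (Real.log C))
  have hhigh : Tendsto (fun r : ℝ => p + Real.log c / Real.log r) (𝓝[>](0:ℝ)) (𝓝 p) := by
    simpa using (tendsto_const_nhds (x := p)).add (const_div_log_tendsto (Real.log c))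
  refine tendsto_of_tendsto_of_tendsto_of_le_of_le' hlow hhigh ?_ ?_
  · filter_upwards [hev, self_mem_nhdsWithin,
      (Ioo_mem_nhdsGT_of_mem (Set.mem_Ico.mpr ⟨le_refl (0:ℝ), one_pos⟩) : Set.Ioo (0:ℝ) 1 ∈ 𝓝[>](0:ℝ))]
      with r hr hr0 hr1
    have hrpos : (0:ℝ) < r := hr0
    have hlogr : Real.log r < 0 := Real.log_neg hrpos hr1.2
    have hV0 : 0 < V r := lt_of_lt_of_le (by positivity) hr.1
    have hlogV : Real.log (V r) ≤ Real.log C + p * Real.log r := by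
      calc Real.log (V r) ≤ Real.log (C * r ^ p) := Real.log_le_log hV0 hr.2
        _ = Real.log C + p * Real.log r := by
            rw [Real.log_mul hC.ne' (by positivity), Real.log_rpow hrpos]
    have e : p + Real.log C / Real.log r = (Real.log C + p * Real.log r) / Real.log r := by
      rw [add_div, mul_div_assoc, div_self hlogr.ne, mul_one, add_comm]

    rw [e, div_le_div_right_of_neg hlogr]
    exact hlogV
  · filter_upwards [hev, self_mem_nhdsWithin,
      (Ioo_mem_nhdsGT_of_mem (Set.mem_Ico.mpr ⟨le_refl (0:ℝ), one_pos⟩) : Set.Ioo (0:ℝ) 1 ∈ 𝓝[>](0:ℝ))]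
      with r hr hr0 hr1
    have hrpos : (0:ℝ) < r := hr0
    have hlogr : Real.log r < 0 := Real.log_neg hrpos hr1.2
    have hV0 : 0 < V r := lt_of_lt_of_le (by positivity) hr.1
    have hlogV : Real.log c + p * Real.log r ≤ Real.log (V r) :=
      calc Real.log c + p * Real.log r = Real.log (c * r ^ p) := by
            rw [Real.log_mul hc.ne' (by positivity), Real.log_rpow hrpos]
        _ ≤ Real.log (V r) := Real.log_le_log (by positivity) hr.1
    have e : p + Real.log c / Real.log r = (Real.log c + p * Real.log r) / Real.log r := by
      rw [add_div, mul_div_assoc, div_self hlogr.ne, mul_one, add_comm]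

    rw [e, div_le_div_right_of_neg hlogr]
    exact hlogV

section volumes
variable {α : ℝ}

lemma knopp_pos (hα : 0 < α) {x : ℝ} (hx : x ∈ Set.Ioo (0:ℝ) 1) (K N : ℕ)
    (hK : Odd K) (hxd : x = (K:ℝ) / 2 ^ N) : 0 < Knopp α x := by
  have hN : 1 ≤ N := by
    by_contra hc
    push_neg at hc
    interval_cases N
    obtain ⟨k, hk⟩ := hK
    rw [hxd] at hx
    simp at hx
    have : (1:ℝ) ≤ (K:ℝ) := by exact_mod_cast Nat.one_le_iff_ne_zero.mpr (by omega)
    linarith [hx.2]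
  obtain ⟨k, hk⟩ := hK
  have hval : (2:ℝ) ^ (N-1) * x = (k:ℤ) + 1/2 := by
    rw [hxd, hk]
    have h2 : (2:ℝ) ^ N = 2 ^ (N-1) * 2 := by
      rw [← pow_succ]
      congr 1
      omega
    push_cast
    rw [h2]
    have : (2:ℝ) ^ (N-1) ≠ 0 := by positivity
    field_simp
  have hphi : phi ((2:ℝ) ^ (N-1) * x) = 1/2 := by
    rw [hval, phi_int_add, phi_eq_abs (by rw [abs_of_nonneg]; norm_num)]
    norm_num
  have hterm : (0:ℝ) < ((2:ℝ)^(-α)) ^ (N-1) * phi ((2:ℝ) ^ (N-1) * x) := by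
    rw [hphi]
    positivity
  rw [Knopp_eq]
  refine lt_of_lt_of_le hterm (Summable.le_tsum (knopp_summable hα x) (N-1) fun j _ =>
    mul_nonneg (pow_nonneg (rho_pos).le _) (phi_nonneg _))

lemma volume_prod_Ioo (a b c d : ℝ) :
    (volume : Measure (ℝ × ℝ)) (Set.Ioo a b ×ˢ Set.Ioo c d)
      = ENNReal.ofReal (b - a) * ENNReal.ofReal (d - c) := by
  rw [Measure.volume_eq_prod, Measure.prod_prod, Real.volume_Ioo, Real.volume_Ioo]

lemma ball_prod (X : ℝ × ℝ) (r : ℝ) :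
    Metric.ball X r = Set.Ioo (X.1 - r) (X.1 + r) ×ˢ Set.Ioo (X.2 - r) (X.2 + r) := by
  rw [← ball_prod_same, Real.ball_eq_Ioo, Real.ball_eq_Ioo]

lemma toReal_bounds {S Q R : Set (ℝ × ℝ)} {a b : ℝ} (ha : 0 ≤ a) (hb : 0 ≤ b)
    (hQ : Q ⊆ S) (hR : S ⊆ R) (hvQ : volume Q = ENNReal.ofReal a)
    (hvR : volume R = ENNReal.ofReal b) :
    a ≤ (volume S).toReal ∧ (volume S).toReal ≤ b := by
  have h1 : volume S ≤ ENNReal.ofReal b := hvR ▸ measure_mono hR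
  have hne : volume S ≠ ⊤ := (lt_of_le_of_lt h1 ENNReal.ofReal_lt_top).ne
  constructor
  · have h2 : ENNReal.ofReal a ≤ volume S := hvQ ▸ measure_mono hQ
    have := ENNReal.toReal_mono hne h2
    rwa [ENNReal.toReal_ofReal ha] at this
  · have h3 := ENNReal.toReal_mono (by simp : ENNReal.ofReal b ≠ ⊤) h1
    rwa [ENNReal.toReal_ofReal hb] at h3
end volumes
section evbounds
variable {α : ℝ}

lemma rpow_two_eq (r : ℝ) : r ^ (2:ℝ) = r * r := by
  rw [show (2:ℝ) = ((2:ℕ):ℝ) by norm_num, Real.rpow_natCast]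
  ring

lemma domain_vol_ev (hα : 0 < α) (hα1 : α < 1) {x : ℝ} (hx : x ∈ Set.Ioo (0:ℝ) 1)
    (K N : ℕ) (hK : Odd K) (hxd : x = (K:ℝ) / 2 ^ N) :
    ∀ᶠ r in 𝓝[>](0:ℝ),
      1 * r ^ (2:ℝ) ≤ (volume (KnoppDomain α ∩ Metric.ball ((x, Knopp α x) : ℝ × ℝ) r)).toReal ∧
      (volume (KnoppDomain α ∩ Metric.ball ((x, Knopp α x) : ℝ × ℝ) r)).toReal ≤ 4 * r ^ (2:ℝ) := by
  obtain ⟨δ, hδ0, hδh, hlow⟩ := knopp_incr_lower hα hα1 K N hxd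
  have hF0 := knopp_pos hα hx K N hK hxd
  have hlow' : ∀ u : ℝ, |u - x| ≤ δ → Knopp α x ≤ Knopp α u := by
    intro u hu
    have h1 := hlow (u - x) hu
    rw [add_sub_cancel] at h1
    linarith [Real.rpow_nonneg (abs_nonneg (u-x)) α]
  have hrmin : (0:ℝ) < min (min δ (Knopp α x)) (min x (1-x)) := by
    refine lt_min (lt_min hδ0 hF0) (lt_min hx.1 (by linarith [hx.2]))
  filter_upwards [Ioo_mem_nhdsGT_of_mem (Set.mem_Ico.mpr ⟨le_rfl, hrmin⟩)] with r hr
  obtain ⟨hr0, hrlt⟩ := hr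
  have hrδ : r ≤ δ := le_of_lt (lt_of_lt_of_le hrlt ((min_le_left _ _).trans (min_le_left _ _)))
  have hrF : r ≤ Knopp α x := le_of_lt (lt_of_lt_of_le hrlt ((min_le_left _ _).trans (min_le_right _ _)))
  have hrx : r ≤ x := le_of_lt (lt_of_lt_of_le hrlt ((min_le_right _ _).trans (min_le_left _ _)))
  have hrx1 : r ≤ 1 - x := le_of_lt (lt_of_lt_of_le hrlt ((min_le_right _ _).trans (min_le_right _ _)))
  have hQS : Set.Ioo (x - r) (x + r) ×ˢ Set.Ioo (Knopp α x - r/2) (Knopp α x)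
      ⊆ KnoppDomain α ∩ Metric.ball ((x, Knopp α x) : ℝ × ℝ) r := by
    rintro ⟨u, y⟩ ⟨hu, hy⟩
    simp only [Set.mem_Ioo] at hu hy
    have hux : |u - x| ≤ δ := by
      rw [abs_le]
      constructor <;> [linarith [hu.1]; linarith [hu.2]]
    have hFu := hlow' u hux
    constructor
    · refine ⟨⟨by linarith [hu.1], by linarith [hu.2]⟩, ⟨by linarith [hy.1], ?_⟩⟩
      exact le_of_lt (lt_of_lt_of_le hy.2 hFu)
    · rw [ball_prod]
      exact ⟨⟨by linarith [hu.1], by linarith [hu.2]⟩, ⟨by linarith [hy.1], by linarith [hy.2]⟩⟩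
  have hvQ : (volume : Measure (ℝ × ℝ)) (Set.Ioo (x - r) (x + r) ×ˢ Set.Ioo (Knopp α x - r/2) (Knopp α x))
      = ENNReal.ofReal (1 * r ^ (2:ℝ)) := by
    rw [volume_prod_Ioo, ← ENNReal.ofReal_mul (by linarith)]
    congr 1
    rw [rpow_two_eq]
    ring
  have hvR : (volume : Measure (ℝ × ℝ)) (Metric.ball ((x, Knopp α x) : ℝ × ℝ) r)
      = ENNReal.ofReal (4 * r ^ (2:ℝ)) := by
    rw [ball_prod, volume_prod_Ioo, ← ENNReal.ofReal_mul (by simp; linarith)]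
    congr 1
    rw [rpow_two_eq]
    ring
  have hpos : (0:ℝ) ≤ 1 * r ^ (2:ℝ) := by positivity
  exact toReal_bounds hpos (by positivity) hQS Set.inter_subset_right hvQ hvR

lemma compl_vol_ev (hα : 0 < α) (hα1 : α < 1) {x : ℝ} (hx : x ∈ Set.Ioo (0:ℝ) 1)
    (K N : ℕ) (hK : Odd K) (hxd : x = (K:ℝ) / 2 ^ N) :
    ∀ᶠ r in 𝓝[>](0:ℝ),
      ((2 * Cu α)⁻¹ ^ (1/α) / 2) * r ^ (1 + 1/α)
        ≤ (volume ((KnoppDomain α)ᶜ ∩ Metric.ball ((x, Knopp α x) : ℝ × ℝ) r)).toReal ∧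
      (volume ((KnoppDomain α)ᶜ ∩ Metric.ball ((x, Knopp α x) : ℝ × ℝ) r)).toReal
        ≤ (4 * (8:ℝ) ^ (1/α)) * r ^ (1 + 1/α) := by
  obtain ⟨δ, hδ0, hδh, hlow⟩ := knopp_incr_lower hα hα1 K N hxd
  have hF0 := knopp_pos hα hx K N hK hxd
  have hCu := Cu_pos hα hα1
  set q : ℝ := (2 * Cu α)⁻¹ ^ (1/α) with hq
  have hq0 : 0 < q := Real.rpow_pos_of_pos (by positivity) _
  have hrmin : (0:ℝ) < min (min δ (Knopp α x)) (min x (1-x)) := by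
    refine lt_min (lt_min hδ0 hF0) (lt_min hx.1 (by linarith [hx.2]))
  -- eventual smallness of r^(1/α - 1)
  have hexp : 0 < 1/α - 1 := by
    rw [lt_sub_iff_add_lt, zero_add, lt_div_iff₀ hα, one_mul]
    exact hα1
  have htend : Tendsto (fun r : ℝ => r ^ (1/α - 1)) (𝓝[>](0:ℝ)) (𝓝 0) := by
    have hc := (Real.continuousAt_rpow_const 0 (1/α - 1) (Or.inr hexp.le)).tendsto
    rw [Real.zero_rpow hexp.ne'] at hc
    exact hc.mono_left nhdsWithin_le_nhds
  have hev2 : ∀ᶠ r in 𝓝[>](0:ℝ), r ^ (1/α - 1) < q⁻¹ :=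
    htend.eventually (gt_mem_nhds (by positivity))
  filter_upwards [Ioo_mem_nhdsGT_of_mem (Set.mem_Ico.mpr ⟨le_rfl, hrmin⟩), hev2,
    self_mem_nhdsWithin] with r hr hrq hr0'
  obtain ⟨hr0, hrlt⟩ := hr
  have hrδ : r ≤ δ := le_of_lt (lt_of_lt_of_le hrlt ((min_le_left _ _).trans (min_le_left _ _)))
  have hrF : r ≤ Knopp α x := le_of_lt (lt_of_lt_of_le hrlt ((min_le_left _ _).trans (min_le_right _ _)))
  have hrx : r ≤ x := le_of_lt (lt_of_lt_of_le hrlt ((min_le_right _ _).trans (min_le_left _ _)))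
  have hrx1 : r ≤ 1 - x := le_of_lt (lt_of_lt_of_le hrlt ((min_le_right _ _).trans (min_le_right _ _)))
  set ρ : ℝ := (r / (2 * Cu α)) ^ (1/α) with hρdef
  have hρ0 : 0 < ρ := Real.rpow_pos_of_pos (by positivity) _
  have hρeq : ρ = r ^ (1/α) * q := by
    rw [hρdef, hq, div_eq_mul_inv, Real.mul_rpow hr0.le (by positivity)]
  have hρr : ρ ≤ r := by
    have h1 : r ^ (1/α) = r ^ (1/α - 1) * r := by
      rw [← Real.rpow_add_one hr0.ne' (1/α - 1), sub_add_cancel]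
    rw [hρeq, h1]
    calc r ^ (1/α - 1) * r * q ≤ q⁻¹ * r * q := by
          apply mul_le_mul_of_nonneg_right _ hq0.le
          exact mul_le_mul_of_nonneg_right hrq.le hr0.le
      _ = r := by field_simp
  have hρα : ρ ^ α = r / (2 * Cu α) := by
    rw [hρdef, ← Real.rpow_mul (by positivity), one_div, inv_mul_cancel₀ hα.ne', Real.rpow_one]
  have hρhalf : ρ ≤ 1/2 := by
    calc ρ ≤ r := hρr
      _ ≤ δ := hrδ
      _ ≤ 1/2 := hδh
  -- increment bounds specialized
  have hlow' : ∀ u : ℝ, |u - x| ≤ δ → Knopp α x + |u - x| ^ α / 8 ≤ Knopp α u := by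
    intro u hu
    have h1 := hlow (u - x) hu
    rwa [add_sub_cancel] at h1
  have hup' : ∀ u : ℝ, |u - x| ≤ 1/2 → Knopp α u ≤ Knopp α x + Cu α * |u - x| ^ α := by
    intro u hu
    have h1 := knopp_incr_upper hα hα1 x (u - x) hu
    rwa [add_sub_cancel] at h1
  -- lower: small box above the graph
  have hS1 : Set.Ioo x (x + ρ) ×ˢ Set.Ioo (Knopp α x + r/2) (Knopp α x + r)
      ⊆ (KnoppDomain α)ᶜ ∩ Metric.ball ((x, Knopp α x) : ℝ × ℝ) r := by
    rintro ⟨u, y⟩ ⟨hu, hy⟩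
    simp only [Set.mem_Ioo] at hu hy
    have huabs : |u - x| ≤ ρ := by
      rw [abs_le]
      constructor <;> [linarith [hu.1]; linarith [hu.2]]
    have hFu : Knopp α u < y := by
      have h1 := hup' u (huabs.trans hρhalf)
      have h2 : |u - x| ^ α ≤ ρ ^ α :=
        Real.rpow_le_rpow (abs_nonneg _) huabs hα.le
      have h3 : Cu α * |u - x| ^ α ≤ Cu α * ρ ^ α := mul_le_mul_of_nonneg_left h2 hCu.le
      rw [hρα] at h3
      have h4 : Cu α * (r / (2 * Cu α)) = r / 2 := by field_simp
      rw [h4] at h3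
      have := hy.1
      linarith
    constructor
    · intro hmem
      exact absurd hmem.2.2 (not_le.mpr hFu)
    · rw [ball_prod]
      refine ⟨⟨by linarith [hu.1], by linarith [hu.2, hρr]⟩, ⟨by linarith [hy.1], by linarith [hy.2]⟩⟩
  -- upper: complement inside thin box
  have hS2 : (KnoppDomain α)ᶜ ∩ Metric.ball ((x, Knopp α x) : ℝ × ℝ) r
      ⊆ Set.Ioo (x - (8*r) ^ (1/α)) (x + (8*r) ^ (1/α)) ×ˢ Set.Ioo (Knopp α x - r) (Knopp α x + r) := by
    rintro ⟨u, y⟩ ⟨hc, hb⟩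
    rw [ball_prod] at hb
    obtain ⟨hb1, hb2⟩ := hb
    simp only [Set.mem_Ioo] at hb1 hb2
    have hu01 : u ∈ Set.Icc (0:ℝ) 1 := ⟨by linarith [hb1.1], by linarith [hb1.2]⟩
    have hy0 : 0 ≤ y := by linarith [hb2.1]
    have hFu : Knopp α u < y := by
      by_contra hcon
      push_neg at hcon
      exact hc ⟨hu01, hy0, hcon⟩
    have huabs : |u - x| ≤ δ := by
      rw [abs_le]
      constructor <;> [linarith [hb1.1]; linarith [hb1.2]]
    have hkey : |u - x| ^ α < 8 * r := by
      have h1 := hlow' u huabs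
      linarith [hb2.2]
    have hux : |u - x| < (8*r) ^ (1/α) := by
      have h2 : (|u - x| ^ α) ^ (1/α) < (8*r) ^ (1/α) :=
        Real.rpow_lt_rpow (Real.rpow_nonneg (abs_nonneg _) α) hkey (by positivity)
      rwa [← Real.rpow_mul (abs_nonneg _), mul_one_div, div_self hα.ne', Real.rpow_one] at h2
    rw [abs_lt] at hux
    exact ⟨⟨by linarith [hux.1], by linarith [hux.2]⟩, ⟨by linarith [hb2.1], by linarith [hb2.2]⟩⟩
  -- volumes
  have hvQ : (volume : Measure (ℝ × ℝ)) (Set.Ioo x (x + ρ) ×ˢ Set.Ioo (Knopp α x + r/2) (Knopp α x + r))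
      = ENNReal.ofReal (q / 2 * r ^ (1 + 1/α)) := by
    rw [volume_prod_Ioo, ← ENNReal.ofReal_mul (by linarith)]
    congr 1
    have : r ^ (1 + 1/α) = r * r ^ (1/α) := by
      rw [Real.rpow_add hr0, Real.rpow_one]
    rw [this, hρeq]
    ring
  have hvR : (volume : Measure (ℝ × ℝ))
      (Set.Ioo (x - (8*r) ^ (1/α)) (x + (8*r) ^ (1/α)) ×ˢ Set.Ioo (Knopp α x - r) (Knopp α x + r))
      = ENNReal.ofReal (4 * (8:ℝ) ^ (1/α) * r ^ (1 + 1/α)) := by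
    rw [volume_prod_Ioo, ← ENNReal.ofReal_mul
      (by linarith [Real.rpow_nonneg (by positivity : (0:ℝ) ≤ 8*r) (1/α)] :
        (0:ℝ) ≤ x + (8*r) ^ (1/α) - (x - (8*r) ^ (1/α)))]
    congr 1
    have h8 : (8*r) ^ (1/α) = (8:ℝ) ^ (1/α) * r ^ (1/α) :=
      Real.mul_rpow (by norm_num) hr0.le
    have : r ^ (1 + 1/α) = r * r ^ (1/α) := by
      rw [Real.rpow_add hr0, Real.rpow_one]
    rw [this, h8]
    ring
  exact toReal_bounds (by positivity) (by positivity) hS1 hS2 hvQ hvR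
end evbounds

theorem exponents_at_dyadic (α : ℝ) (hα : 0 < α) (hα1 : α < 1)
    (x : ℝ) (hx : x ∈ Set.Ioo (0:ℝ) 1) (hd : isDyadic x) :
    Ew (KnoppDomain α)ᶜ (x, Knopp α x) = 1/α - 1 ∧
    Es (KnoppDomain α)ᶜ (x, Knopp α x) = 1/α - 1 ∧
    Ew (KnoppDomain α) (x, Knopp α x) = 0 ∧
    Es (KnoppDomain α) (x, Knopp α x) = 0 := by
  obtain ⟨K, N, hK, hxd⟩ := hd
  have hCu := Cu_pos hα hα1
  have hdt : Tendsto (fun r : ℝ =>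
      Real.log ((volume (KnoppDomain α ∩ Metric.ball ((x, Knopp α x) : ℝ × ℝ) r)).toReal) / Real.log r)
      (𝓝[>](0:ℝ)) (𝓝 2) :=
    tendsto_log_ratio _ 2 1 4 one_pos (domain_vol_ev hα hα1 hx K N hK hxd)
  have hct : Tendsto (fun r : ℝ =>
      Real.log ((volume ((KnoppDomain α)ᶜ ∩ Metric.ball ((x, Knopp α x) : ℝ × ℝ) r)).toReal) / Real.log r)
      (𝓝[>](0:ℝ)) (𝓝 (1 + 1/α)) :=
    tendsto_log_ratio _ (1 + 1/α) ((2 * Cu α)⁻¹ ^ (1/α) / 2) (4 * (8:ℝ) ^ (1/α))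
      (by have := Real.rpow_pos_of_pos (by positivity : (0:ℝ) < (2 * Cu α)⁻¹) (1/α); linarith)
      (compl_vol_ev hα hα1 hx K N hK hxd)
  refine ⟨?_, ?_, ?_, ?_⟩
  · rw [Ew, hct.liminf_eq]; ring
  · rw [Es, hct.limsup_eq]; ring
  · rw [Ew, hdt.liminf_eq]; norm_num
  · rw [Es, hdt.limsup_eq]; norm_num
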